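/- Let X be a connected, locally connected, locally compact Hausdorff space. Then for every compact K ⊆ X there exists a compact connected K' ⊆ X with K ⊆ K'. -/
import Mathlib

open Set Topology

lemma aux_nbhd {X : Type*} [TopologicalSpace X] [T2Space X]
    [LocallyConnectedSpace X] [LocallyCompactSpace X] (x : X) :
    ∃ C : Set X, IsCompact C ∧ IsConnected C ∧ C ∈ 𝓝 x := by
  obtain ⟨C₀, hC₀, hxC₀⟩ := exists_compact_mem_nhds x
  have hmem : interior C₀ ∈ 𝓝 x := interior_mem_nhds.mpr hxC₀
  set U := connectedComponentIn (interior C₀) x with hU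
  have hUn : U ∈ 𝓝 x := connectedComponentIn_mem_nhds hmem
  have hUconn : IsConnected U :=
    (isConnected_connectedComponentIn_iff).mpr (mem_interior_iff_mem_nhds.mpr hxC₀)
  refine ⟨closure U, ?_, hUconn.closure, Filter.mem_of_superset hUn subset_closure⟩
  have hsub : closure U ⊆ C₀ := by
    calc closure U ⊆ closure (interior C₀) :=
          closure_mono (connectedComponentIn_subset _ _)
      _ ⊆ closure C₀ := closure_mono interior_subset
      _ = C₀ := hC₀.isClosed.closure_eq
  exact hC₀.of_isClosed_subset isClosed_closure hsub

lemma aux_join {X : Type*} [TopologicalSpace X] [T2Space X] [ConnectedSpace X]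
    [LocallyConnectedSpace X] [LocallyCompactSpace X] (x₀ y : X) :
    ∃ C : Set X, IsCompact C ∧ IsConnected C ∧ x₀ ∈ C ∧ y ∈ C := by
  set A : Set X := {y | ∃ C : Set X, IsCompact C ∧ IsConnected C ∧ x₀ ∈ C ∧ y ∈ C} with hA
  have hopen : IsOpen A := by
    rw [isOpen_iff_mem_nhds]
    rintro z ⟨C, hCc, hCconn, hx₀, hz⟩
    obtain ⟨D, hDc, hDconn, hDn⟩ := aux_nbhd z
    have hzD : z ∈ D := mem_of_mem_nhds hDn
    refine Filter.mem_of_superset hDn fun w hw => ?_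
    exact ⟨C ∪ D, hCc.union hDc, hCconn.union ⟨z, hz, hzD⟩ hDconn,
      Or.inl hx₀, Or.inr hw⟩
  have hclosed : IsClosed A := by
    rw [← closure_subset_iff_isClosed]
    intro z hz
    obtain ⟨D, hDc, hDconn, hDn⟩ := aux_nbhd z
    obtain ⟨w, hwD, C, hCc, hCconn, hx₀, hwC⟩ := mem_closure_iff_nhds.mp hz D hDn
    exact ⟨C ∪ D, hCc.union hDc, hCconn.union ⟨w, hwC, hwD⟩ hDconn,
      Or.inl hx₀, Or.inr (mem_of_mem_nhds hDn)⟩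
  have hne : A.Nonempty := by
    obtain ⟨C, hCc, hCconn, hCn⟩ := aux_nbhd x₀
    exact ⟨x₀, C, hCc, hCconn, mem_of_mem_nhds hCn, mem_of_mem_nhds hCn⟩
  have : A = univ := IsClopen.eq_univ ⟨hclosed, hopen⟩ hne
  have := this ▸ mem_univ y
  exact this

theorem statement18 {X : Type*} [TopologicalSpace X] [T2Space X] [ConnectedSpace X]
    [LocallyConnectedSpace X] [LocallyCompactSpace X]
    (K : Set X) (hK : IsCompact K) :
    ∃ K' : Set X, IsCompact K' ∧ IsConnected K' ∧ K ⊆ K' := by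
  obtain ⟨x₀⟩ : Nonempty X := inferInstance
  -- for each x, a compact connected neighborhood containing x₀
  have hE : ∀ x : X, ∃ E : Set X, IsCompact E ∧ IsConnected E ∧ x₀ ∈ E ∧ E ∈ 𝓝 x := by
    intro x
    obtain ⟨C, hCc, hCconn, hx₀C, hxC⟩ := aux_join x₀ x
    obtain ⟨D, hDc, hDconn, hDn⟩ := aux_nbhd x
    exact ⟨C ∪ D, hCc.union hDc, hCconn.union ⟨x, hxC, mem_of_mem_nhds hDn⟩ hDconn,
      Or.inl hx₀C, Filter.mem_of_superset hDn subset_union_right⟩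
  choose E hEc hEconn hEx₀ hEn using hE
  obtain ⟨t, hts, hcov⟩ := hK.elim_nhds_subcover E (fun x _ => hEn x)
  refine ⟨{x₀} ∪ ⋃ x ∈ t, E x, ?_, ?_, hcov.trans subset_union_right⟩
  · exact isCompact_singleton.union (t.isCompact_biUnion fun x _ => hEc x)
  · constructor
    · exact ⟨x₀, Or.inl rfl⟩
    · have : {x₀} ∪ ⋃ x ∈ t, E x = ⋃₀ (insert {x₀} ((fun x => E x) '' t)) := by
        simp [sUnion_insert, sUnion_image]
      rw [this]
      apply isPreconnected_sUnion x₀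
      · rintro s (rfl | ⟨x, hx, rfl⟩)
        · exact rfl
        · exact hEx₀ x
      · rintro s (rfl | ⟨x, hx, rfl⟩)
        · exact isPreconnected_singleton
        · exact (hEconn x).isPreconnected
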